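/- The Zariski closure in M₂(ℚ̄) of the multiplicative monoid generated by the matrices [[2,0],[0,4]] and [[1,0],[1,1]] equals the set {[[x,0],[y,x²]] : x, y ∈ ℚ̄}; equivalently, the vanishing ideal of this monoid in ℚ̄[x₁₁,x₁₂,x₂₁,x₂₂] is generated by x₁₂ and x₁₁² − x₂₂. -/

import Mathlib

noncomputable section

/-- The algebraic closure of `ℚ`. -/
abbrev Qbar : Type := AlgebraicClosure ℚ

/-- View a rational matrix inside `M₂(ℚ̄)`. -/
def liftMat (M : Matrix (Fin 2) (Fin 2) ℚ) : Matrix (Fin 2) (Fin 2) Qbar :=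
  M.map (algebraMap ℚ Qbar)

/-- The Zariski closure of a set of `2 × 2` matrices over `ℚ̄`, identified with affine
space `ℚ̄⁴`: the common zero set of all polynomials vanishing on the set. -/
def matZClosure (S : Set (Matrix (Fin 2) (Fin 2) Qbar)) :
    Set (Matrix (Fin 2) (Fin 2) Qbar) :=
  {A | ∀ p : MvPolynomial (Fin 2 × Fin 2) Qbar,
      (∀ B ∈ S, MvPolynomial.eval (fun ij => B ij.1 ij.2) p = 0) →
      MvPolynomial.eval (fun ij => A ij.1 ij.2) p = 0}

/-- Substitution sending the four matrix coordinates to `x, 0, y, x²`. -/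
def gsub : Fin 2 × Fin 2 → Polynomial (Polynomial Qbar) := fun ij =>
  !![Polynomial.C Polynomial.X, 0; Polynomial.X, (Polynomial.C Polynomial.X)^2] ij.1 ij.2

lemma key (p : MvPolynomial (Fin 2 × Fin 2) Qbar) (a b : Qbar) :
    Polynomial.eval a (Polynomial.eval (Polynomial.C b) (MvPolynomial.aeval gsub p)) =
      MvPolynomial.eval (fun ij => !![a, 0; b, a^2] ij.1 ij.2) p := by
  induction p using MvPolynomial.induction_on with
  | C c => simp [algebraMap, Algebra.algebraMap]
  | add p q hp hq => simp [hp, hq]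
  | mul_X p ij hp =>
      obtain ⟨i, j⟩ := ij
      fin_cases i <;> fin_cases j <;>
        simp [gsub, hp, Matrix.cons_val_zero, Matrix.cons_val_one]

lemma swap_eval (q : Polynomial (Polynomial Qbar)) (a b : Qbar) :
    Polynomial.eval b (q.map (Polynomial.evalRingHom a)) =
      Polynomial.eval a (Polynomial.eval (Polynomial.C b) q) := by
  rw [Polynomial.eval_map]
  have h1 : Polynomial.eval (Polynomial.C b) q =
      Polynomial.eval₂ (RingHom.id _) (Polynomial.C b) q := rfl
  have := Polynomial.hom_eval₂ q (RingHom.id (Polynomial Qbar))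
    (Polynomial.evalRingHom a) (Polynomial.C b)
  simp only [RingHom.comp_id, Polynomial.coe_evalRingHom, Polynomial.eval_C] at this
  rw [h1, ← this]

def Dm : Matrix (Fin 2) (Fin 2) ℚ := !![2, 0; 0, 4]
def Um : Matrix (Fin 2) (Fin 2) ℚ := !![1, 0; 1, 1]

lemma monoid_prop : ∀ M ∈ Submonoid.closure {Dm, Um},
    M 0 1 = 0 ∧ M 0 0 ^ 2 = M 1 1 := by
  intro M hM
  induction hM using Submonoid.closure_induction with
  | mem x hx =>
      rcases hx with h | h <;> subst h <;> simp [Dm, Um] <;> norm_num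
  | one => simp
  | mul x y _ _ hx hy =>
      constructor
      · simp [Matrix.mul_apply, Fin.sum_univ_two, hx.1, hy.1]
      · simp [Matrix.mul_apply, Fin.sum_univ_two, hx.1, hy.1, ← hx.2, ← hy.2]
        ring

lemma Um_pow (m : ℕ) : Um ^ m = !![1, 0; (m : ℚ), 1] := by
  induction m with
  | zero => simp [Matrix.one_fin_two]
  | succ n ih =>
      rw [pow_succ, ih, Um]
      ext i j
      fin_cases i <;> fin_cases j <;>
        simp [Matrix.mul_apply, Fin.sum_univ_two]

lemma Dm_pow (n : ℕ) : Dm ^ n = !![(2:ℚ)^n, 0; 0, (4:ℚ)^n] := by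
  induction n with
  | zero => simp [Matrix.one_fin_two]
  | succ k ih =>
      rw [pow_succ, ih, Dm]
      ext i j
      fin_cases i <;> fin_cases j <;>
        simp [Matrix.mul_apply, Fin.sum_univ_two, pow_succ]

lemma point_mem (n m : ℕ) :
    !![(2:ℚ)^n, 0; (m:ℚ) * 2^n, (4:ℚ)^n] ∈ Submonoid.closure {Dm, Um} := by
  have hU : Um ∈ Submonoid.closure {Dm, Um} := Submonoid.subset_closure (by simp)
  have hD : Dm ∈ Submonoid.closure {Dm, Um} := Submonoid.subset_closure (by simp)
  have := mul_mem (pow_mem hU m) (pow_mem hD n)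
  rwa [Um_pow, Dm_pow, show !![1, 0; (m : ℚ), 1] * !![(2:ℚ)^n, 0; 0, (4:ℚ)^n]
      = !![(2:ℚ)^n, 0; (m:ℚ) * 2^n, (4:ℚ)^n] from by
    ext i j
    fin_cases i <;> fin_cases j <;>
      simp [Matrix.mul_apply, Fin.sum_univ_two]] at this

lemma two_pow_inj : Function.Injective (fun n : ℕ => (2:Qbar)^n) := by
  have : (fun n : ℕ => (2:Qbar)^n) = (fun k : ℕ => (k : Qbar)) ∘ (fun n => 2^n) := by
    funext n; simp only [Function.comp]; push_cast; ring
  rw [this]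
  exact Nat.cast_injective.comp (Nat.pow_right_injective le_rfl)

/-- The Zariski closure in `M₂(ℚ̄)` of the multiplicative monoid generated by
`[[2,0],[0,4]]` and `[[1,0],[1,1]]` is `{[[x,0],[y,x²]] : x, y ∈ ℚ̄}`, i.e. the zero
set of the polynomials `x₁₂` and `x₁₁² − x₂₂`. -/
theorem closure_of_monoid_example :
    matZClosure (liftMat ''
        (Submonoid.closure {!![2, 0; 0, 4], !![1, 0; 1, 1]} :
          Submonoid (Matrix (Fin 2) (Fin 2) ℚ))) =
      {A : Matrix (Fin 2) (Fin 2) Qbar | A 0 1 = 0 ∧ A 0 0 ^ 2 = A 1 1} := by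
  ext A
  constructor
  · intro hA
    have hvan : ∀ (p : MvPolynomial (Fin 2 × Fin 2) Qbar),
        (∀ M ∈ Submonoid.closure {Dm, Um},
          MvPolynomial.eval (fun ij => liftMat M ij.1 ij.2) p = 0) →
        MvPolynomial.eval (fun ij => A ij.1 ij.2) p = 0 := by
      intro p hp
      exact hA p (by rintro B ⟨M, hM, rfl⟩; exact hp M hM)
    constructor
    · have := hvan (MvPolynomial.X (0, 1)) (by
        intro M hM
        simp [liftMat, (monoid_prop M hM).1])
      simpa using this
    · have := hvan (MvPolynomial.X (0, 0) ^ 2 - MvPolynomial.X (1, 1)) (by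
        intro M hM
        have hval : MvPolynomial.eval (fun ij => liftMat M ij.1 ij.2)
            (MvPolynomial.X ((0 : Fin 2), (0 : Fin 2)) ^ 2 - MvPolynomial.X (1, 1)) =
            (liftMat M 0 0) ^ 2 - liftMat M 1 1 := by
          simp
        rw [hval]
        simp only [liftMat, Matrix.map_apply]
        rw [← map_pow, (monoid_prop M hM).2, sub_self])
      have hval : MvPolynomial.eval (fun ij => A ij.1 ij.2)
          (MvPolynomial.X ((0 : Fin 2), (0 : Fin 2)) ^ 2 - MvPolynomial.X (1, 1)) =
          A 0 0 ^ 2 - A 1 1 := by simp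
      rw [hval] at this
      exact sub_eq_zero.mp this
  · rintro ⟨hA1, hA2⟩ p hp
    set a := A 0 0 with ha
    set b := A 1 0 with hb
    set q : Polynomial (Polynomial Qbar) := MvPolynomial.aeval gsub p with hqdef
    -- p vanishes at the lifted points
    have hpt : ∀ n m : ℕ,
        Polynomial.eval ((m : Qbar) * 2^n)
          (q.map (Polynomial.evalRingHom ((2:Qbar)^n))) = 0 := by
      intro n m
      rw [swap_eval, key]
      have h0 := hp (liftMat !![(2:ℚ)^n, 0; (m:ℚ) * 2^n, (4:ℚ)^n])
        ⟨_, point_mem n m, rfl⟩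
      have heq : (fun ij : Fin 2 × Fin 2 =>
          liftMat !![(2:ℚ)^n, 0; (m:ℚ) * 2^n, (4:ℚ)^n] ij.1 ij.2) =
          (fun ij : Fin 2 × Fin 2 =>
            !![(2:Qbar)^n, 0; (m : Qbar) * 2^n, ((2:Qbar)^n)^2] ij.1 ij.2) := by
        funext ij
        obtain ⟨i, j⟩ := ij
        fin_cases i <;> fin_cases j
        · simp [liftMat, map_pow]
        · simp [liftMat]
        · simp [liftMat]
        · simp [liftMat, map_pow]
          rw [show ((4:Qbar)) = 2^2 by norm_num, ← pow_mul, ← pow_mul, mul_comm]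
      rw [heq] at h0
      exact h0
    -- step 1: for all n, the specialized polynomial in y is zero
    have h1 : ∀ n : ℕ, q.map (Polynomial.evalRingHom ((2:Qbar)^n)) = 0 := by
      intro n
      apply Polynomial.eq_zero_of_infinite_isRoot
      apply Set.infinite_of_injective_forall_mem
        (f := fun m : ℕ => (m : Qbar) * 2^n)
      · intro m m' h
        have h2 : ((2:Qbar)^n) ≠ 0 := pow_ne_zero _ two_ne_zero
        exact Nat.cast_injective (mul_right_cancel₀ h2 h)
      · intro m
        exact hpt n m
    -- step 2: for all y, q evaluated at C y is zero
    have h2 : ∀ y : Qbar, Polynomial.eval (Polynomial.C y) q = 0 := by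
      intro y
      apply Polynomial.eq_zero_of_infinite_isRoot
      apply Set.infinite_of_injective_forall_mem (f := fun n : ℕ => (2:Qbar)^n)
      · exact two_pow_inj
      · intro n
        have := swap_eval q ((2:Qbar)^n) y
        rw [h1 n] at this
        simpa [Polynomial.IsRoot] using this.symm
    have hAeq : (fun ij : Fin 2 × Fin 2 => A ij.1 ij.2) =
        (fun ij : Fin 2 × Fin 2 => !![a, 0; b, a^2] ij.1 ij.2) := by
      funext ij
      obtain ⟨i, j⟩ := ij
      fin_cases i <;> fin_cases j <;> simp [ha, hb, hA1, ← hA2]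
    rw [hAeq, ← key p a b, h2 b]
    simp

end
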